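/- arXiv:math/0603144 — 2 statements merged into one kernel-verified Lean document; each statement's English description precedes it below -/
import Mathlib

section
/- For complex numbers q with |q|<1 and u with |u|<1, and any nonnegative integer n, the q-Euler number H_{n,q}(u^{-1}) defined by the generating function (1-u)∑_{l=0}^∞ u^l e^{[l]_q t} = ∑_{n=0}^∞ H_{n,q}(u^{-1}) t^n/n! satisfies H_{n,q}(u^{-1}) = ((1-u)/(1-q)^n) ∑_{l=0}^n C(n,l) (-1)^l / (1 - u q^l). -/
/-- q-Euler number closed form. -/
theorem stmt_0 (q u : ℂ) (hq : ‖q‖ < 1) (hu : ‖u‖ < 1) (n : ℕ) :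
    (1 - u) * ∑' l : ℕ, u ^ l * ((1 - q ^ l) / (1 - q)) ^ n =
      ((1 - u) / (1 - q) ^ n) *
        ∑ l ∈ Finset.range (n + 1), (n.choose l : ℂ) * (-1) ^ l / (1 - u * q ^ l) := by
  have hx : ∀ k : ℕ, ‖u * q ^ k‖ < 1 := by
    intro k
    calc ‖u * q ^ k‖ = ‖u‖ * ‖q‖ ^ k := by rw [norm_mul, norm_pow]
    _ ≤ ‖u‖ * 1 := by
        apply mul_le_mul_of_nonneg_left _ (norm_nonneg u)
        exact pow_le_one₀ (norm_nonneg q) hq.le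
    _ < 1 := by simpa using hu
  have hne : ∀ k : ℕ, (1 : ℂ) - u * q ^ k ≠ 0 := by
    intro k h
    have h1 := hx k
    have : u * q ^ k = 1 := by linear_combination -h
    rw [this] at h1
    simp at h1
  have hpt : ∀ l : ℕ, u ^ l * ((1 - q ^ l) / (1 - q)) ^ n
      = (∑ k ∈ Finset.range (n + 1),
          (n.choose k : ℂ) * (-1) ^ k * (u * q ^ k) ^ l) / (1 - q) ^ n := by
    intro l
    have hbin : (1 - q ^ l) ^ n
        = ∑ k ∈ Finset.range (n + 1), (n.choose k : ℂ) * (-1) ^ k * (q ^ k) ^ l := by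
      rw [sub_eq_neg_add, add_pow]
      refine Finset.sum_congr rfl fun k _ => ?_
      rw [neg_pow, one_pow, ← pow_mul, mul_comm l k, pow_mul]
      ring
    rw [div_pow, hbin, ← mul_div_assoc, Finset.mul_sum, Finset.sum_div, Finset.sum_div]
    refine Finset.sum_congr rfl fun k _ => ?_
    rw [mul_pow]
    ring
  have hsummable : ∀ k : ℕ,
      Summable (fun l : ℕ => (n.choose k : ℂ) * (-1) ^ k * (u * q ^ k) ^ l) := by
    intro k
    exact (summable_geometric_of_norm_lt_one (hx k)).mul_left _
  have key : (∑' l : ℕ, u ^ l * ((1 - q ^ l) / (1 - q)) ^ n)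
      = (∑ k ∈ Finset.range (n + 1),
          (n.choose k : ℂ) * (-1) ^ k / (1 - u * q ^ k)) / (1 - q) ^ n := by
    rw [tsum_congr hpt, tsum_div_const]
    congr 1
    rw [Summable.tsum_finsetSum (fun k _ => hsummable k)]
    refine Finset.sum_congr rfl fun k _ => ?_
    rw [tsum_mul_left, tsum_geometric_of_norm_lt_one (hx k), div_eq_mul_inv]
  rw [key]
  ring
end

section
/- For complex q with |q|<1, u with |u|<1, positive integer r, x>0, and nonnegative integer n, the multiple q-Euler polynomial satisfies H^{(r)}_{n,q}(u^{-1},x) = (1-u)^r (1/(1-q))^n ∑_{j=0}^n C(n,j) (-1)^j q^{jx} / (1-uq^j)^r. -/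
set_option maxHeartbeats 1000000


open Finset

lemma pi_succ_key (w : ℂ) (r : ℕ) :
    (fun f : Fin (r+1) → ℕ => w ^ (∑ i, f i)) ∘ (Fin.consEquiv fun _ => ℕ) =
      fun p : ℕ × (Fin r → ℕ) => w ^ p.1 * w ^ (∑ i, p.2 i) := by
  ext p
  simp [Fin.sum_cons, pow_add]

lemma pi_succ_key_real (w : ℝ) (r : ℕ) :
    (fun f : Fin (r+1) → ℕ => w ^ (∑ i, f i)) ∘ (Fin.consEquiv fun _ => ℕ) =
      fun p : ℕ × (Fin r → ℕ) => w ^ p.1 * w ^ (∑ i, p.2 i) := by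
  ext p
  simp [Fin.sum_cons, pow_add]

lemma geom_pi_summable_real (w : ℝ) (h0 : 0 ≤ w) (hw : w < 1) (r : ℕ) :
    Summable (fun f : Fin r → ℕ => w ^ (∑ i, f i)) := by
  induction r with
  | zero => exact (hasSum_fintype _).summable
  | succ r ih =>
      have hgeo : Summable (fun n : ℕ => w ^ n) :=
        summable_geometric_of_lt_one h0 hw
      have hprod : Summable (fun p : ℕ × (Fin r → ℕ) => w ^ p.1 * w ^ (∑ i, p.2 i)) := by
        apply Summable.mul_of_nonneg hgeo ih <;> intro z <;> exact pow_nonneg h0 _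
      rw [← (Fin.consEquiv fun _ : Fin (r+1) => ℕ).summable_iff, pi_succ_key_real]
      exact hprod

lemma geom_pi_hasSum (w : ℂ) (hw : ‖w‖ < 1) (r : ℕ) :
    HasSum (fun f : Fin r → ℕ => w ^ (∑ i, f i)) ((1 - w)⁻¹ ^ r) := by
  induction r with
  | zero =>
      simpa using hasSum_fintype (fun f : Fin 0 → ℕ => w ^ (∑ i, f i))
  | succ r ih =>
      have hgeo : HasSum (fun n : ℕ => w ^ n) (1 - w)⁻¹ :=
        hasSum_geometric_of_norm_lt_one hw
      have hsum : Summable (fun p : ℕ × (Fin r → ℕ) => w ^ p.1 * w ^ (∑ i, p.2 i)) := by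
        apply Summable.of_norm
        have h1 : Summable (fun n : ℕ => ‖w‖ ^ n) :=
          summable_geometric_of_lt_one (norm_nonneg w) hw
        have h2 : Summable (fun f : Fin r → ℕ => ‖w‖ ^ (∑ i, f i)) := by
          have := geom_pi_summable_real ‖w‖ (norm_nonneg w) hw r
          simpa using this
        have h3 : Summable (fun p : ℕ × (Fin r → ℕ) => ‖w‖ ^ p.1 * ‖w‖ ^ (∑ i, p.2 i)) := by
          apply Summable.mul_of_nonneg h1 h2 <;> intro z <;> exact pow_nonneg (norm_nonneg w) _
        convert h3 using 1
        ext p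
        simp [norm_mul, norm_pow]
      have hmul := hgeo.mul ih hsum
      rw [← (Fin.consEquiv fun _ : Fin (r+1) => ℕ).hasSum_iff, pi_succ_key, pow_succ,
        mul_comm ((1 - w)⁻¹ ^ r)]
      exact hmul

/-- Closed form of the multiple q-Euler polynomial. -/
theorem stmt_17 (q u : ℂ) (hq : ‖q‖ < 1) (hu : ‖u‖ < 1)
    (r : ℕ) (hr : 0 < r) (x : ℝ) (hx : 0 < x) (n : ℕ) :
    (1 - u) ^ r *
        ∑' f : Fin r → ℕ,
          u ^ (∑ i, f i) * ((1 - q ^ ((x : ℂ) + (∑ i, f i : ℕ))) / (1 - q)) ^ n =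
      (1 - u) ^ r * (1 / (1 - q)) ^ n *
        ∑ j ∈ Finset.range (n + 1),
          (n.choose j : ℂ) * (-1) ^ j * q ^ ((j : ℂ) * x) / (1 - u * q ^ j) ^ r := by
  have hu' : ‖u‖ < 1 := hu
  have hq' : ‖q‖ < 1 := hq
  have hu1 : (1 : ℂ) - u ≠ 0 := by
    intro h
    have : u = 1 := by linear_combination -h
    rw [this] at hu'
    simp at hu'
  have hkey : ∀ j : ℕ, ‖u * q ^ j‖ < 1 := by
    intro j
    calc ‖u * q ^ j‖ = ‖u‖ * ‖q‖ ^ j := by rw [norm_mul, norm_pow]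
      _ ≤ ‖u‖ * 1 := by
          gcongr
          exact pow_le_one₀ (norm_nonneg q) hq'.le
      _ < 1 := by simpa using hu'
  by_cases hq0 : q = 0
  · subst hq0
    have hne : ∀ N : ℕ, ((x : ℂ) + (N : ℕ)) ≠ 0 := by
      intro N h
      have := congrArg Complex.re h
      simp at this
      nlinarith [Nat.cast_nonneg (α := ℝ) N]
    have hL : ∀ f : Fin r → ℕ,
        u ^ (∑ i, f i) * ((1 - (0:ℂ) ^ ((x : ℂ) + (∑ i, f i : ℕ))) / (1 - 0)) ^ n
          = u ^ (∑ i, f i) := by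
      intro f
      rw [Complex.zero_cpow (hne _)]
      simp
    rw [tsum_congr hL, (geom_pi_hasSum u hu' r).tsum_eq]
    have hR : ∑ j ∈ Finset.range (n + 1),
        (n.choose j : ℂ) * (-1) ^ j * (0:ℂ) ^ ((j : ℂ) * x) / (1 - u * (0:ℂ) ^ j) ^ r
        = ((1 - u) ^ r)⁻¹ := by
      rw [Finset.sum_eq_single 0]
      · simp
      · intro j hj hj0
        have hjx : ((j : ℂ) * x) ≠ 0 := by
          simp only [mul_ne_zero_iff, Nat.cast_ne_zero, Complex.ofReal_ne_zero]
          exact ⟨hj0, ne_of_gt hx⟩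
        rw [Complex.zero_cpow hjx]
        simp
      · simp
    rw [hR]
    rw [inv_pow]
    field_simp
    simp
  · -- q ≠ 0
    have hq1 : (1 : ℂ) - q ≠ 0 := by
      intro h
      have : q = 1 := by linear_combination -h
      rw [this] at hq'
      simp at hq'
    have point : ∀ N : ℕ, u ^ N * ((1 - q ^ ((x : ℂ) + (N : ℕ))) / (1 - q)) ^ n
        = ∑ j ∈ Finset.range (n + 1),
            (1 / (1 - q)) ^ n * (n.choose j : ℂ) * (-1) ^ j * q ^ ((j : ℂ) * x)
              * (u * q ^ j) ^ (N : ℕ) := by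
      intro N
      have hbin : (1 - q ^ ((x : ℂ) + (N : ℕ))) ^ n
          = ∑ j ∈ Finset.range (n + 1),
              (n.choose j : ℂ) * (-1) ^ j * (q ^ ((x : ℂ) + (N : ℕ))) ^ j := by
        rw [sub_eq_add_neg, add_comm, add_pow]
        refine Finset.sum_congr rfl fun j hj => ?_
        rw [neg_pow]
        ring
      have hpow : ∀ j : ℕ, (q ^ ((x : ℂ) + (N : ℕ))) ^ j
          = q ^ ((j : ℂ) * x) * (q ^ j) ^ N := by
        intro j
        rw [← Complex.cpow_nat_mul, mul_add, Complex.cpow_add _ _ hq0]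
        congr 1
        have : (j : ℂ) * (N : ℕ) = ((j * N : ℕ) : ℂ) := by push_cast; ring
        rw [this, Complex.cpow_natCast, pow_mul]
      rw [div_pow, hbin, Finset.sum_div, Finset.mul_sum]
      refine Finset.sum_congr rfl fun j _ => ?_
      rw [hpow j, mul_pow, one_div, inv_pow, div_eq_mul_inv]
      ring
    have swap : (∑' f : Fin r → ℕ,
          u ^ (∑ i, f i) * ((1 - q ^ ((x : ℂ) + (∑ i, f i : ℕ))) / (1 - q)) ^ n)
        = ∑ j ∈ Finset.range (n + 1),
            ∑' f : Fin r → ℕ,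
              (1 / (1 - q)) ^ n * (n.choose j : ℂ) * (-1) ^ j * q ^ ((j : ℂ) * x)
                * (u * q ^ j) ^ (∑ i, f i) := by
      have step : (∑' f : Fin r → ℕ,
            u ^ (∑ i, f i) * ((1 - q ^ ((x : ℂ) + (∑ i, f i : ℕ))) / (1 - q)) ^ n)
          = ∑' f : Fin r → ℕ, ∑ j ∈ Finset.range (n + 1),
              (1 / (1 - q)) ^ n * (n.choose j : ℂ) * (-1) ^ j * q ^ ((j : ℂ) * x)
                * (u * q ^ j) ^ (∑ i, f i) :=
        tsum_congr fun f => point (∑ i, f i)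
      rw [step]
      exact Summable.tsum_finsetSum fun j _ =>
        ((geom_pi_hasSum (u * q ^ j) (hkey j) r).summable.mul_left _)
    rw [swap]
    have hper : ∀ j ∈ Finset.range (n + 1),
        (∑' f : Fin r → ℕ,
            (1 / (1 - q)) ^ n * (n.choose j : ℂ) * (-1) ^ j * q ^ ((j : ℂ) * x)
              * (u * q ^ j) ^ (∑ i, f i))
          = (1 / (1 - q)) ^ n * ((n.choose j : ℂ) * (-1) ^ j * q ^ ((j : ℂ) * x)
              / (1 - u * q ^ j) ^ r) := by
      intro j _
      rw [tsum_mul_left, (geom_pi_hasSum (u * q ^ j) (hkey j) r).tsum_eq,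
        inv_pow, div_eq_mul_inv]
      ring
    rw [Finset.sum_congr rfl hper, ← Finset.mul_sum]
    ring
end
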